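/- Let (g,σ,B) be an indecomposable solvable symmetric triple with g = h ⊕ m and an adapted decomposition m = z ⊕ W ⊕ z* with maximal center (z = z(g)). Then the Lie algebra g is nilpotent if and only if ⁅z*, ⁅z*, W⁆⁆ ⊆ z. In particular, if W = 0 then g is nilpotent. -/

import Mathlib

/-- An indecomposable solvable symmetric triple with adapted decomposition
`m = z ⊕ W ⊕ z*` with maximal center is nilpotent iff `⁅z*, ⁅z*, W⁆⁆ ⊆ z`.  In particular,
if `W = 0` then `g` is nilpotent. -/
theorem nilpotent_iff_brackets_in_center
    (L : Type*) [LieRing L] [LieAlgebra ℝ L] [FiniteDimensional ℝ L]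
    [LieAlgebra.IsSolvable L]
    (σ : L →ₗ⁅ℝ⁆ L) (hσ : ∀ x, σ (σ x) = x)
    (H M : Submodule ℝ L)
    (hH : ∀ x, x ∈ H ↔ σ x = x)
    (hM : ∀ x, x ∈ M ↔ σ x = -x)
    (hcompl : IsCompl H M)
    (hHspan : H = Submodule.span ℝ {z : L | ∃ x ∈ M, ∃ y ∈ M, ⁅x, y⁆ = z})
    (B : LinearMap.BilinForm ℝ L)
    (hBnd : B.Nondegenerate)
    (hBsymm : ∀ x y : L, B x y = B y x)
    (hBσ : ∀ x y : L, B (σ x) (σ y) = B x y)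
    (hBad : ∀ x y z : L, B ⁅x, y⁆ z = B x ⁅y, z⁆)
    (hindec : ∀ m' : Submodule ℝ L, m' ≤ M →
      (∀ h ∈ H, ∀ x ∈ m', ⁅h, x⁆ ∈ m') →
      (∀ x ∈ m', (∀ y ∈ m', B x y = 0) → x = 0) →
      m' = ⊥ ∨ m' = M)
    -- adapted decomposition m = z ⊕ W ⊕ z* with maximal center
    (W Zstar : Submodule ℝ L)
    (hWM : W ≤ M) (hZstarM : Zstar ≤ M)
    (hdisj₁ : Disjoint (LieAlgebra.center ℝ L).toSubmodule W)
    (hdisj₂ : Disjoint ((LieAlgebra.center ℝ L).toSubmodule ⊔ W) Zstar)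
    (hsum : (LieAlgebra.center ℝ L).toSubmodule ⊔ W ⊔ Zstar = M)
    (hZiso : ∀ x ∈ LieAlgebra.center ℝ L, ∀ y ∈ LieAlgebra.center ℝ L, B x y = 0)
    (hZstariso : ∀ x ∈ Zstar, ∀ y ∈ Zstar, B x y = 0)
    (hWZ : ∀ w ∈ W, ∀ z ∈ LieAlgebra.center ℝ L, B w z = 0)
    (hWZstar : ∀ w ∈ W, ∀ a ∈ Zstar, B w a = 0)
    (hWpos : ∀ w ∈ W, w ≠ 0 → 0 < B w w)
    (hpair₁ : ∀ a ∈ LieAlgebra.center ℝ L, (∀ b ∈ Zstar, B a b = 0) → a = 0)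
    (hpair₂ : ∀ b ∈ Zstar, (∀ a ∈ LieAlgebra.center ℝ L, B a b = 0) → b = 0)
    (hbr₁ : ∀ h ∈ H, ∀ x ∈ (LieAlgebra.center ℝ L).toSubmodule ⊔ W,
      ⁅h, x⁆ ∈ (LieAlgebra.center ℝ L).toSubmodule)
    (hbr₂ : ∀ h ∈ H, ∀ x ∈ Zstar,
      ⁅h, x⁆ ∈ (LieAlgebra.center ℝ L).toSubmodule ⊔ W) :
    (LieRing.IsNilpotent L ↔
      ∀ a ∈ Zstar, ∀ b ∈ Zstar, ∀ w ∈ W,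
        ⁅a, ⁅b, w⁆⁆ ∈ (LieAlgebra.center ℝ L).toSubmodule) ∧
    (W = ⊥ → LieRing.IsNilpotent L) := by
  classical
  set Z : Submodule ℝ L := (LieAlgebra.center ℝ L).toSubmodule with hZdef
  have hZmem : ∀ ζ : L, ζ ∈ Z ↔ ∀ x : L, ⁅x, ζ⁆ = 0 := fun ζ =>
    LieModule.mem_maxTrivSubmodule ℝ L L ζ
  have hzl : ∀ ζ ∈ Z, ∀ x : L, ⁅x, ζ⁆ = 0 := fun ζ hζ => (hZmem ζ).1 hζ
  have hzr : ∀ ζ ∈ Z, ∀ x : L, ⁅ζ, x⁆ = 0 := by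
    intro ζ hζ x
    rw [← lie_skew, hzl ζ hζ x, neg_zero]
  -- σ eigenspace facts
  have hσH : ∀ h ∈ H, σ h = h := fun h hh => (hH h).1 hh
  have hσM : ∀ m ∈ M, σ m = -m := fun m hm => (hM m).1 hm
  have hMH : ∀ x ∈ M, ∀ y ∈ M, ⁅x, y⁆ ∈ H := by
    intro x hx y hy
    rw [hH, LieHom.map_lie, hσM x hx, hσM y hy, neg_lie, lie_neg, neg_neg]
  have hHHmem : ∀ x ∈ H, ∀ y ∈ H, ⁅x, y⁆ ∈ H := by
    intro x hx y hy; rw [hH, LieHom.map_lie, hσH x hx, hσH y hy]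
  -- orthogonality of H and M
  have hHMorth : ∀ h ∈ H, ∀ m ∈ M, B h m = 0 := by
    intro h hh m hm
    have h1 := hBσ h m
    rw [hσH h hh, hσM m hm] at h1
    have h2 : B h (-m) = -(B h m) := map_neg (B h) m
    rw [h2] at h1; linarith
  have hZM : Z ≤ M := (le_sup_left.trans le_sup_left).trans hsum.le
  have hWM' : W ≤ M := hWM
  -- decompositions
  have decompM : ∀ m ∈ M, ∃ ζ ∈ Z, ∃ w ∈ W, ∃ a ∈ Zstar, m = ζ + w + a := by
    intro m hm
    rw [← hsum] at hm
    obtain ⟨u, hu, a, ha, rfl⟩ := Submodule.mem_sup.1 hm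
    obtain ⟨ζ, hζ, w, hw, rfl⟩ := Submodule.mem_sup.1 hu
    exact ⟨ζ, hζ, w, hw, a, ha, rfl⟩
  have decompL : ∀ x : L, ∃ h ∈ H, ∃ m ∈ M, x = h + m := by
    intro x
    have hx : x ∈ H ⊔ M := by
      rw [codisjoint_iff.1 hcompl.codisjoint]; trivial
    obtain ⟨h, hh, m, hm, rfl⟩ := Submodule.mem_sup.1 hx
    exact ⟨h, hh, m, hm, rfl⟩
  have decompL4 : ∀ x : L, ∃ h ∈ H, ∃ ζ ∈ Z, ∃ w ∈ W, ∃ a ∈ Zstar,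
      x = h + ζ + w + a := by
    intro x
    obtain ⟨h, hh, m, hm, rfl⟩ := decompL x
    obtain ⟨ζ, hζ, w, hw, a, ha, rfl⟩ := decompM m hm
    exact ⟨h, hh, ζ, hζ, w, hw, a, ha, by abel⟩
  have zeroB : ∀ x : L, (∀ y : L, B x y = 0) → x = 0 := fun x hx => hBnd.1 x hx
  -- an element of H which kills M is zero
  have HZero : ∀ u ∈ H, (∀ m ∈ M, ⁅u, m⁆ = 0) → u = 0 := by
    intro u hu h0
    apply zeroB
    have hBH : ∀ v ∈ H, B u v = 0 := by
      intro v hv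
      have hle : H ≤ LinearMap.ker (B u) := by
        rw [hHspan]
        apply Submodule.span_le.2
        rintro z ⟨x, hx, y, hy, rfl⟩
        simp only [SetLike.mem_coe, LinearMap.mem_ker]
        rw [← hBad u x y, h0 x hx]
        simp
      exact LinearMap.mem_ker.1 (hle hv)
    intro y
    obtain ⟨h, hh, m, hm, rfl⟩ := decompL y
    rw [map_add, hBH h hh, hHMorth u hu m hm, add_zero]
  -- an element of Z orthogonal to Zstar is zero
  have Zzero : ∀ ζ ∈ Z, (∀ a ∈ Zstar, B ζ a = 0) → ζ = 0 := fun ζ hζ => hpair₁ ζ hζ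
  -- ### The main equivalence
  have main : LieRing.IsNilpotent L ↔
      ∀ a ∈ Zstar, ∀ b ∈ Zstar, ∀ w ∈ W, ⁅a, ⁅b, w⁆⁆ ∈ Z := by
    constructor
    · -- nilpotent → condition
      intro hnil
      have had : ∀ x : L, IsNilpotent (LieAlgebra.ad ℝ L x) :=
        (LieAlgebra.isNilpotent_iff_forall (R := ℝ) (L := L)).1 hnil
      -- first : the diagonal case
      have key : ∀ a ∈ Zstar, ∀ w ∈ W, ⁅a, ⁅a, w⁆⁆ ∈ Z := by
        intro a ha
        set g : Module.End ℝ L := (LieAlgebra.ad ℝ L a : Module.End ℝ L) with hgdef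
        have hgapp : ∀ y : L, g y = ⁅a, y⁆ := fun y => rfl
        have skew : ∀ x y : L, B (g x) y = -(B x (g y)) := by
          intro x y
          have h1 : B x ⁅a, y⁆ = B ⁅x, a⁆ y := (hBad x a y).symm
          have h2 : (⁅x, a⁆ : L) = -⁅a, x⁆ := (lie_skew x a).symm
          rw [hgapp, hgapp, h1, h2, map_neg, LinearMap.neg_apply, neg_neg]
        have signpow : ∀ (n : ℕ) (x y : L),
            B ((g ^ n) x) y = (-1 : ℝ) ^ n * B x ((g ^ n) y) := by
          intro n
          induction n with
          | zero => intro x y; simp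
          | succ n ih =>
            intro x y
            have e1 : (g ^ (n + 1)) x = (g ^ n) (g x) := by
              rw [pow_succ, Module.End.mul_apply]
            have e2 : g ((g ^ n) y) = (g ^ (n + 1)) y := by
              rw [pow_succ', Module.End.mul_apply]
            rw [e1, ih (g x) y, skew x ((g ^ n) y), e2]
            ring
        have gZ : ∀ ζ ∈ Z, g ζ = 0 := fun ζ hζ => hzl ζ hζ a
        have gpowZ : ∀ (n : ℕ), ∀ ζ ∈ Z, (g ^ n) ζ ∈ Z := by
          intro n
          induction n with
          | zero => intro ζ hζ; simpa using hζ
          | succ n ih =>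
            intro ζ hζ
            have : (g ^ (n + 1)) ζ = (g ^ n) (g ζ) := by
              rw [pow_succ, Module.End.mul_apply]
            rw [this, gZ ζ hζ, map_zero]
            exact Z.zero_mem
        have evenWZ : ∀ (k : ℕ), ∀ w ∈ W, (g ^ (2 * k)) w ∈ Z ⊔ W := by
          intro k
          induction k with
          | zero => intro w hw; simpa using Submodule.mem_sup_right hw
          | succ k ih =>
            intro w hw
            have e : (g ^ (2 * (k + 1))) w = (g ^ 2) ((g ^ (2 * k)) w) := by
              have : 2 * (k + 1) = 2 + 2 * k := by ring
              rw [this, pow_add, Module.End.mul_apply]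
            rw [e]
            obtain ⟨ζ, hζ, u, hu, he⟩ := Submodule.mem_sup.1 (ih w hw)
            rw [← he, map_add]
            have e2 : (g ^ 2) ζ = 0 := by
              rw [pow_two, Module.End.mul_apply, gZ ζ hζ, map_zero]
            rw [e2, zero_add]
            have e3 : (g ^ 2) u = ⁅a, ⁅a, u⁆⁆ := by
              rw [pow_two, Module.End.mul_apply, hgapp, hgapp]
            rw [e3]
            have hh : (⁅a, u⁆ : L) ∈ H := hMH a (hZstarM ha) u (hWM hu)
            have : (⁅a, ⁅a, u⁆⁆ : L) = -⁅⁅a, u⁆, a⁆ := (lie_skew _ _).symm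
            rw [this]
            exact Submodule.neg_mem _ (hbr₂ _ hh a ha)
        -- the descending property
        set P : ℕ → Prop := fun k => ∀ w ∈ W, (g ^ (2 * k)) w ∈ Z with hPdef
        have Pstep : ∀ k : ℕ, P (k + 2) → P (k + 1) := by
          intro k hP w hw
          obtain ⟨ζ, hζ, u, hu, he⟩ := Submodule.mem_sup.1 (evenWZ (k + 1) w hw)
          -- show u = 0
          have hBζu : B ζ u = 0 := by rw [hBsymm]; exact hWZ u hu ζ hζ
          have hgu : (g ^ (2 * (k + 1))) u ∈ Z := by
            have e1 : (g ^ (2 * (k + 1))) u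
                = (g ^ (2 * (k + 1))) ((g ^ (2 * (k + 1))) w) - (g ^ (2 * (k + 1))) ζ := by
              rw [← map_sub]
              congr 1
              rw [← he]; abel
            have e2 : (g ^ (2 * (k + 1))) ζ = 0 := by
              have : (g ^ (2 * (k + 1))) ζ = (g ^ (2 * k + 1)) (g ζ) := by
                have h3 : 2 * (k + 1) = (2 * k + 1) + 1 := by ring
                rw [h3, pow_succ, Module.End.mul_apply]
              rw [this, gZ ζ hζ, map_zero]
            have e3 : (g ^ (2 * (k + 1))) ((g ^ (2 * (k + 1))) w)
                = (g ^ (2 * k)) ((g ^ (2 * (k + 2))) w) := by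
              rw [← Module.End.mul_apply, ← Module.End.mul_apply, ← pow_add, ← pow_add]
              congr 1
              ring
            rw [e1, e2, sub_zero, e3]
            exact gpowZ (2 * k) _ (hP w hw)
          have hBuu : B u u = 0 := by
            have e1 : B u u = B ((g ^ (2 * (k + 1))) w) u - B ζ u := by
              rw [← he, map_add, LinearMap.add_apply]; ring
            have e2 : B ((g ^ (2 * (k + 1))) w) u
                = (-1 : ℝ) ^ (2 * (k + 1)) * B w ((g ^ (2 * (k + 1))) u) :=
              signpow _ w u
            have e3 : B w ((g ^ (2 * (k + 1))) u) = 0 := hWZ w hw _ hgu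
            have e4 : (-1 : ℝ) ^ (2 * (k + 1)) = 1 := by
              rw [pow_mul]; norm_num
            rw [e1, e2, e3, e4, hBζu]; ring
          have hu0 : u = 0 := by
            by_contra hne
            exact absurd hBuu (ne_of_gt (hWpos u hu hne))
          rw [← he, hu0, add_zero]
          exact hζ
        obtain ⟨n, hn⟩ := had a
        have Pbig : P (n + 1) := by
          intro w hw
          have : (g ^ (2 * (n + 1))) w = 0 := by
            have e : (2 * (n + 1)) = (n + 2) + n := by ring
            rw [e, pow_add, Module.End.mul_apply]
            rw [show (g ^ n : Module.End ℝ L) = 0 from hn]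
            simp
          rw [this]; exact Z.zero_mem
        have down : ∀ d : ℕ, P (d + 1) → P 1 := by
          intro d
          induction d with
          | zero => exact id
          | succ m ih => intro hPm; exact ih (Pstep m hPm)
        have P1 : P 1 := down n Pbig
        intro w hw
        have := P1 w hw
        have e : (g ^ (2 * 1)) w = ⁅a, ⁅a, w⁆⁆ := by
          norm_num [pow_two, Module.End.mul_apply, hgapp]
        rwa [e] at this
      -- polarization
      intro a ha b hb w hw
      have hA := key a ha w hw
      have hD := key b hb w hw
      have hS := key (a + b) (Zstar.add_mem ha hb) w hw
      have hexp : (⁅a + b, ⁅a + b, w⁆⁆ : L)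
          = ⁅a, ⁅a, w⁆⁆ + ⁅a, ⁅b, w⁆⁆ + ⁅b, ⁅a, w⁆⁆ + ⁅b, ⁅b, w⁆⁆ := by
        simp only [add_lie, lie_add]; abel
      rw [hexp] at hS
      have h2 : (⁅a, ⁅b, w⁆⁆ + ⁅b, ⁅a, w⁆⁆ : L) ∈ Z := by
        have e : (⁅a, ⁅b, w⁆⁆ + ⁅b, ⁅a, w⁆⁆ : L)
            = (⁅a, ⁅a, w⁆⁆ + ⁅a, ⁅b, w⁆⁆ + ⁅b, ⁅a, w⁆⁆ + ⁅b, ⁅b, w⁆⁆) - ⁅a, ⁅a, w⁆⁆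
              - ⁅b, ⁅b, w⁆⁆ := by abel
        rw [e]
        exact Z.sub_mem (Z.sub_mem hS hA) hD
      have h3 : (⁅a, ⁅b, w⁆⁆ - ⁅b, ⁅a, w⁆⁆ : L) ∈ Z := by
        rw [← lie_lie]
        exact hbr₁ _ (hMH a (hZstarM ha) b (hZstarM hb)) w (Submodule.mem_sup_right hw)
      have h4 : ((2 : ℝ) • ⁅a, ⁅b, w⁆⁆ : L) ∈ Z := by
        have e : ((2 : ℝ) • ⁅a, ⁅b, w⁆⁆ : L)
            = (⁅a, ⁅b, w⁆⁆ + ⁅b, ⁅a, w⁆⁆) + (⁅a, ⁅b, w⁆⁆ - ⁅b, ⁅a, w⁆⁆) := by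
          rw [two_smul]; abel
        rw [e]; exact Z.add_mem h2 h3
      have h5 := Z.smul_mem ((2 : ℝ)⁻¹) h4
      rwa [smul_smul, inv_mul_cancel₀ (by norm_num : (2 : ℝ) ≠ 0), one_smul] at h5
    · -- condition → nilpotent
      intro cond
      -- key elementwise identities
      have condN : ∀ a ∈ Zstar, ∀ b ∈ Zstar, ∀ w ∈ W, (⁅⁅b, w⁆, a⁆ : L) ∈ Z := by
        intro a ha b hb w hw
        rw [← lie_skew]
        exact Z.neg_mem (cond a ha b hb w hw)
      have L1 : ∀ b ∈ Zstar, ∀ w ∈ W, ∀ w' ∈ W, (⁅⁅b, w⁆, w'⁆ : L) = 0 := by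
        intro b hb w hw w' hw'
        have hζ : (⁅⁅b, w⁆, w'⁆ : L) ∈ Z :=
          hbr₁ _ (hMH b (hZstarM hb) w (hWM hw)) w' (Submodule.mem_sup_right hw')
        apply Zzero _ hζ
        intro a ha
        rw [hBsymm]
        have e : B a ⁅⁅b, w⁆, w'⁆ = B ⁅a, ⁅b, w⁆⁆ w' := (hBad a ⁅b, w⁆ w').symm
        rw [e, hBsymm]
        exact hWZ w' hw' _ (cond a ha b hb w hw)
      have L4 : ∀ a ∈ Zstar, ∀ w ∈ W, ∀ w' ∈ W, (⁅a, ⁅w, w'⁆⁆ : L) = 0 := by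
        intro a ha w hw w' hw'
        rw [leibniz_lie]
        have e1 : (⁅⁅a, w⁆, w'⁆ : L) = 0 := L1 a ha w hw w' hw'
        have e2 : (⁅w, ⁅a, w'⁆⁆ : L) = -⁅⁅a, w'⁆, w⁆ := (lie_skew _ _).symm
        rw [e1, e2, L1 a ha w' hw' w hw, neg_zero, add_zero]
      have L3 : ∀ w ∈ W, ∀ w' ∈ W, ∀ w'' ∈ W, (⁅⁅w, w'⁆, w''⁆ : L) = 0 := by
        intro w hw w' hw' w'' hw''
        have hζ : (⁅⁅w, w'⁆, w''⁆ : L) ∈ Z :=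
          hbr₁ _ (hMH w (hWM hw) w' (hWM hw')) w'' (Submodule.mem_sup_right hw'')
        apply Zzero _ hζ
        intro a ha
        rw [hBsymm]
        have e : B a ⁅⁅w, w'⁆, w''⁆ = B ⁅a, ⁅w, w'⁆⁆ w'' := (hBad a ⁅w, w'⁆ w'').symm
        rw [e, L4 a ha w hw w' hw']
        simp
      have L5a : ∀ h ∈ H, ∀ h' ∈ H, ∀ w ∈ W, (⁅⁅h, h'⁆, w⁆ : L) = 0 := by
        intro h hh h' hh' w hw
        rw [lie_lie]
        have e1 : (⁅h, ⁅h', w⁆⁆ : L) = 0 :=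
          hzl _ (hbr₁ h' hh' w (Submodule.mem_sup_right hw)) h
        have e2 : (⁅h', ⁅h, w⁆⁆ : L) = 0 :=
          hzl _ (hbr₁ h hh w (Submodule.mem_sup_right hw)) h'
        rw [e1, e2, sub_zero]
      have L5b : ∀ h ∈ H, ∀ h' ∈ H, ∀ a ∈ Zstar, (⁅⁅h, h'⁆, a⁆ : L) ∈ Z := by
        intro h hh h' hh' a ha
        rw [lie_lie]
        exact Z.sub_mem (hbr₁ h hh _ (hbr₂ h' hh' a ha)) (hbr₁ h' hh' _ (hbr₂ h hh a ha))
      have L5 : ∀ h ∈ H, ∀ h' ∈ H, ∀ h'' ∈ H, (⁅⁅h, h'⁆, h''⁆ : L) = 0 := by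
        intro h hh h' hh' h'' hh''
        apply HZero _ (hHHmem _ (hHHmem h hh h' hh') h'' hh'')
        intro m hm
        obtain ⟨ζ, hζ, w, hw, a, ha, rfl⟩ := decompM m hm
        rw [lie_add, lie_add]
        have e1 : (⁅⁅⁅h, h'⁆, h''⁆, ζ⁆ : L) = 0 := hzl ζ hζ _
        have e2 : (⁅⁅⁅h, h'⁆, h''⁆, w⁆ : L) = 0 := by
          rw [lie_lie]
          have f1 : (⁅⁅h, h'⁆, ⁅h'', w⁆⁆ : L) = 0 :=
            hzl _ (hbr₁ h'' hh'' w (Submodule.mem_sup_right hw)) _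
          rw [f1, L5a h hh h' hh' w hw, lie_zero, sub_zero]
        have e3 : (⁅⁅⁅h, h'⁆, h''⁆, a⁆ : L) = 0 := by
          rw [lie_lie]
          have f2 : (⁅h'', ⁅⁅h, h'⁆, a⁆⁆ : L) = 0 :=
            hzl _ (L5b h hh h' hh' a ha) h''
          rw [f2, sub_zero]
          obtain ⟨ζ₂, hζ₂, w₂, hw₂, he⟩ := Submodule.mem_sup.1 (hbr₂ h'' hh'' a ha)
          rw [← he, lie_add]
          rw [hzl ζ₂ hζ₂ _, L5a h hh h' hh' w₂ hw₂, add_zero]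
        rw [e1, e2, e3]; simp
      have L6 : ∀ h ∈ H, ∀ w ∈ W, ∀ w' ∈ W, (⁅h, ⁅w, w'⁆⁆ : L) = 0 := by
        intro h hh w hw w' hw'
        rw [leibniz_lie]
        have e1 : (⁅⁅h, w⁆, w'⁆ : L) = 0 :=
          hzr _ (hbr₁ h hh w (Submodule.mem_sup_right hw)) w'
        have e2 : (⁅w, ⁅h, w'⁆⁆ : L) = 0 :=
          hzl _ (hbr₁ h hh w' (Submodule.mem_sup_right hw')) w
        rw [e1, e2, add_zero]
      -- the auxiliary submodules
      let P2 : Submodule ℝ L :=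
        { carrier := {p | p ∈ H ∧ (∀ w ∈ W, ⁅p, w⁆ = 0) ∧ (∀ a ∈ Zstar, ⁅p, a⁆ ∈ Z)}
          add_mem' := by
            rintro x y ⟨hx1, hx2, hx3⟩ ⟨hy1, hy2, hy3⟩
            refine ⟨H.add_mem hx1 hy1, ?_, ?_⟩
            · intro w hw; rw [add_lie, hx2 w hw, hy2 w hw, add_zero]
            · intro a ha; rw [add_lie]; exact Z.add_mem (hx3 a ha) (hy3 a ha)
          zero_mem' := ⟨H.zero_mem, fun w _ => zero_lie w, fun a _ => by
            rw [zero_lie]; exact Z.zero_mem⟩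
          smul_mem' := by
            rintro c x ⟨hx1, hx2, hx3⟩
            refine ⟨H.smul_mem c hx1, ?_, ?_⟩
            · intro w hw; rw [smul_lie, hx2 w hw, smul_zero]
            · intro a ha; rw [smul_lie]; exact Z.smul_mem c (hx3 a ha) }
      have P2mem : ∀ p : L, p ∈ P2 ↔
          (p ∈ H ∧ (∀ w ∈ W, ⁅p, w⁆ = 0) ∧ (∀ a ∈ Zstar, ⁅p, a⁆ ∈ Z)) := fun p => Iff.rfl
      let P4 : Submodule ℝ L :=
        { carrier := {p | p ∈ P2 ∧ ∀ x ∈ H, ⁅x, p⁆ = 0}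
          add_mem' := by
            rintro x y ⟨hx1, hx2⟩ ⟨hy1, hy2⟩
            exact ⟨P2.add_mem hx1 hy1, fun u hu => by
              rw [lie_add, hx2 u hu, hy2 u hu, add_zero]⟩
          zero_mem' := ⟨P2.zero_mem, fun u _ => lie_zero u⟩
          smul_mem' := by
            rintro c x ⟨hx1, hx2⟩
            exact ⟨P2.smul_mem c hx1, fun u hu => by
              rw [lie_smul, hx2 u hu, smul_zero]⟩ }
      have P4mem : ∀ p : L, p ∈ P4 ↔ (p ∈ P2 ∧ ∀ x ∈ H, ⁅x, p⁆ = 0) := fun p => Iff.rfl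
      let P3 : Submodule ℝ L :=
        { carrier := {p | p ∈ P2 ∧ ∀ x ∈ H, ⁅x, p⁆ ∈ P4}
          add_mem' := by
            rintro x y ⟨hx1, hx2⟩ ⟨hy1, hy2⟩
            exact ⟨P2.add_mem hx1 hy1, fun u hu => by
              rw [lie_add]; exact P4.add_mem (hx2 u hu) (hy2 u hu)⟩
          zero_mem' := ⟨P2.zero_mem, fun u _ => by rw [lie_zero]; exact P4.zero_mem⟩
          smul_mem' := by
            rintro c x ⟨hx1, hx2⟩
            exact ⟨P2.smul_mem c hx1, fun u hu => by
              rw [lie_smul]; exact P4.smul_mem c (hx2 u hu)⟩ }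
      have P3mem : ∀ p : L, p ∈ P3 ↔ (p ∈ P2 ∧ ∀ x ∈ H, ⁅x, p⁆ ∈ P4) := fun p => Iff.rfl
      have hP4P3 : P4 ≤ P3 := by
        intro p hp
        rw [P4mem] at hp
        exact (P3mem p).2 ⟨hp.1, fun x hx => by rw [hp.2 x hx]; exact P4.zero_mem⟩
      -- membership packs
      have hHHP2 : ∀ h ∈ H, ∀ h' ∈ H, (⁅h, h'⁆ : L) ∈ P2 := by
        intro h hh h' hh'
        exact (P2mem _).2 ⟨hHHmem h hh h' hh',
          fun w hw => L5a h hh h' hh' w hw, fun a ha => L5b h hh h' hh' a ha⟩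
      have hWWP2 : ∀ w ∈ W, ∀ w' ∈ W, (⁅w, w'⁆ : L) ∈ P2 := by
        intro w hw w' hw'
        refine (P2mem _).2 ⟨hMH w (hWM hw) w' (hWM hw'),
          fun w'' hw'' => L3 w hw w' hw' w'' hw'', fun a ha => ?_⟩
        rw [← lie_skew, L4 a ha w hw w' hw', neg_zero]
        exact Z.zero_mem
      have hAWP2 : ∀ a ∈ Zstar, ∀ w ∈ W, (⁅a, w⁆ : L) ∈ P2 := by
        intro a ha w hw
        exact (P2mem _).2 ⟨hMH a (hZstarM ha) w (hWM hw),
          fun w' hw' => L1 a ha w hw w' hw',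
          fun b hb => condN b hb a ha w hw⟩
      have hWWP4 : ∀ w ∈ W, ∀ w' ∈ W, (⁅w, w'⁆ : L) ∈ P4 := by
        intro w hw w' hw'
        exact (P4mem _).2 ⟨hWWP2 w hw w' hw', fun x hx => L6 x hx w hw w' hw'⟩
      have hHP2P4 : ∀ h ∈ H, ∀ p ∈ P2, (⁅h, p⁆ : L) ∈ P4 := by
        intro h hh p hp
        rw [P2mem] at hp
        obtain ⟨hp1, hp2, hp3⟩ := hp
        refine (P4mem _).2 ⟨(P2mem _).2 ⟨hHHmem h hh p hp1, ?_, ?_⟩, ?_⟩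
        · intro w hw
          rw [lie_lie, hp2 w hw, lie_zero,
            hzl _ (hbr₁ h hh w (Submodule.mem_sup_right hw)) p]
          simp
        · intro a ha
          rw [lie_lie]
          have f1 : (⁅h, ⁅p, a⁆⁆ : L) = 0 := hzl _ (hp3 a ha) h
          have f2 : (⁅p, ⁅h, a⁆⁆ : L) = 0 := by
            obtain ⟨ζ₂, hζ₂, w₂, hw₂, he⟩ := Submodule.mem_sup.1 (hbr₂ h hh a ha)
            rw [← he, lie_add, hzl ζ₂ hζ₂ p, hp2 w₂ hw₂, add_zero]
          rw [f1, f2, sub_zero]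
          exact Z.zero_mem
        · intro x hx
          rw [← lie_skew, L5 h hh p hp1 x hx, neg_zero]
      have hAWP3 : ∀ a ∈ Zstar, ∀ w ∈ W, (⁅a, w⁆ : L) ∈ P3 := by
        intro a ha w hw
        refine (P3mem _).2 ⟨hAWP2 a ha w hw, fun x hx => ?_⟩
        rw [leibniz_lie]
        have f2 : (⁅a, ⁅x, w⁆⁆ : L) = 0 :=
          hzl _ (hbr₁ x hx w (Submodule.mem_sup_right hw)) a
        rw [f2, add_zero]
        obtain ⟨ζ₂, hζ₂, w₂, hw₂, he⟩ := Submodule.mem_sup.1 (hbr₂ x hx a ha)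
        rw [← he, add_lie, hzr ζ₂ hζ₂ w]
        rw [zero_add]
        exact hWWP4 w₂ hw₂ w hw
      -- the filtration
      let S : ℕ → Submodule ℝ L := fun k =>
        match k with
        | 0 => ⊤
        | 1 => H ⊔ (Z ⊔ W)
        | 2 => P2 ⊔ (Z ⊔ W)
        | 3 => P3 ⊔ Z
        | 4 => P4 ⊔ Z
        | 5 => Z
        | _ + 6 => ⊥
      -- bracket of H with Z ⊔ W lands in the right place
      have hbrZW : ∀ h ∈ H, ∀ u ∈ Z ⊔ W, (⁅h, u⁆ : L) ∈ Z := fun h hh u hu => hbr₁ h hh u hu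
      have bracket : ∀ k : ℕ, ∀ x : L, ∀ v ∈ S k, (⁅x, v⁆ : L) ∈ S (k + 1) := by
        intro k x v hv
        obtain ⟨hx, hhx, ζx, hζx, wx, hwx, ax, hax, rfl⟩ := decompL4 x
        rcases k with _ | _ | _ | _ | _ | _ | k
        · -- k = 0 : into H ⊔ (Z ⊔ W)
          clear hv
          obtain ⟨hy, hhy, my, hmy, rfl⟩ := decompL v
          have hmx : ζx + wx + ax ∈ M :=
            M.add_mem (M.add_mem (hZM hζx) (hWM hwx)) (hZstarM hax)
          have hHM_ZW : ∀ h ∈ H, ∀ m ∈ M, (⁅h, m⁆ : L) ∈ Z ⊔ W := by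
            intro h hh m hm
            obtain ⟨ζ, hζ, w, hw, a, ha, rfl⟩ := decompM m hm
            rw [lie_add, lie_add]
            refine Submodule.add_mem _ (Submodule.add_mem _ ?_ ?_) ?_
            · rw [hzl ζ hζ h]; exact Submodule.zero_mem _
            · exact Submodule.mem_sup_left (hbr₁ h hh w (Submodule.mem_sup_right hw))
            · exact hbr₂ h hh a ha
          have e : (⁅hx + (ζx + wx + ax), hy + my⁆ : L)
              = ⁅hx, hy⁆ + ⁅hx, my⁆ + (⁅ζx + wx + ax, hy⁆ + ⁅ζx + wx + ax, my⁆) := by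
            rw [add_lie, lie_add, lie_add]
          rw [show (hx + ζx + wx + ax : L) = hx + (ζx + wx + ax) by abel, e]
          refine Submodule.add_mem _ (Submodule.add_mem _ ?_ ?_) (Submodule.add_mem _ ?_ ?_)
          · exact Submodule.mem_sup_left (hHHmem hx hhx hy hhy)
          · exact Submodule.mem_sup_right (hHM_ZW hx hhx my hmy)
          · rw [← lie_skew]
            exact Submodule.neg_mem _ (Submodule.mem_sup_right (hHM_ZW hy hhy _ hmx))
          · exact Submodule.mem_sup_left (hMH _ hmx my hmy)
        · -- k = 1 : from H ⊔ (Z ⊔ W) into P2 ⊔ (Z ⊔ W)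
          obtain ⟨h, hh, u, hu, rfl⟩ := Submodule.mem_sup.1 hv
          obtain ⟨ζ, hζ, w, hw, rfl⟩ := Submodule.mem_sup.1 hu
          rw [lie_add, lie_add]
          refine Submodule.add_mem _ ?_ (Submodule.add_mem _ ?_ ?_)
          · -- ⁅x, h⁆
            rw [add_lie, add_lie, add_lie]
            refine Submodule.add_mem _ (Submodule.add_mem _ (Submodule.add_mem _ ?_ ?_) ?_) ?_
            · exact Submodule.mem_sup_left (hHHP2 hx hhx h hh)
            · rw [hzr ζx hζx h]; exact Submodule.zero_mem _
            · rw [← lie_skew]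
              refine Submodule.neg_mem _ (Submodule.mem_sup_right (Submodule.mem_sup_left ?_))
              exact hbr₁ h hh wx (Submodule.mem_sup_right hwx)
            · rw [← lie_skew]
              exact Submodule.neg_mem _ (Submodule.mem_sup_right (hbr₂ h hh ax hax))
          · -- ⁅x, ζ⁆
            rw [hzl ζ hζ]; exact Submodule.zero_mem _
          · -- ⁅x, w⁆
            rw [add_lie, add_lie, add_lie]
            refine Submodule.add_mem _ (Submodule.add_mem _ (Submodule.add_mem _ ?_ ?_) ?_) ?_
            · refine Submodule.mem_sup_right (Submodule.mem_sup_left ?_)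
              exact hbr₁ hx hhx w (Submodule.mem_sup_right hw)
            · rw [hzr ζx hζx w]; exact Submodule.zero_mem _
            · exact Submodule.mem_sup_left (hWWP2 wx hwx w hw)
            · exact Submodule.mem_sup_left (hAWP2 ax hax w hw)
        · -- k = 2 : from P2 ⊔ (Z ⊔ W) into P3 ⊔ Z
          obtain ⟨p, hp, u, hu, rfl⟩ := Submodule.mem_sup.1 hv
          obtain ⟨ζ, hζ, w, hw, rfl⟩ := Submodule.mem_sup.1 hu
          have hp' := (P2mem p).1 hp
          rw [lie_add, lie_add]
          refine Submodule.add_mem _ ?_ (Submodule.add_mem _ ?_ ?_)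
          · -- ⁅x, p⁆
            rw [add_lie, add_lie, add_lie]
            refine Submodule.add_mem _ (Submodule.add_mem _ (Submodule.add_mem _ ?_ ?_) ?_) ?_
            · exact Submodule.mem_sup_left (hP4P3 (hHP2P4 hx hhx p hp))
            · rw [hzr ζx hζx p]; exact Submodule.zero_mem _
            · rw [← lie_skew, hp'.2.1 wx hwx, neg_zero]; exact Submodule.zero_mem _
            · rw [← lie_skew]
              exact Submodule.neg_mem _ (Submodule.mem_sup_right (hp'.2.2 ax hax))
          · rw [hzl ζ hζ]; exact Submodule.zero_mem _
          · rw [add_lie, add_lie, add_lie]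
            refine Submodule.add_mem _ (Submodule.add_mem _ (Submodule.add_mem _ ?_ ?_) ?_) ?_
            · exact Submodule.mem_sup_right (hbr₁ hx hhx w (Submodule.mem_sup_right hw))
            · rw [hzr ζx hζx w]; exact Submodule.zero_mem _
            · exact Submodule.mem_sup_left (hP4P3 (hWWP4 wx hwx w hw))
            · exact Submodule.mem_sup_left (hAWP3 ax hax w hw)
        · -- k = 3 : from P3 ⊔ Z into P4 ⊔ Z
          obtain ⟨p, hp, ζ, hζ, rfl⟩ := Submodule.mem_sup.1 hv
          have hp' := (P3mem p).1 hp
          have hp2 := (P2mem p).1 hp'.1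
          rw [lie_add, hzl ζ hζ, add_zero, add_lie, add_lie, add_lie]
          refine Submodule.add_mem _ (Submodule.add_mem _ (Submodule.add_mem _ ?_ ?_) ?_) ?_
          · exact Submodule.mem_sup_left (hp'.2 hx hhx)
          · rw [hzr ζx hζx p]; exact Submodule.zero_mem _
          · rw [← lie_skew, hp2.2.1 wx hwx, neg_zero]; exact Submodule.zero_mem _
          · rw [← lie_skew]
            exact Submodule.neg_mem _ (Submodule.mem_sup_right (hp2.2.2 ax hax))
        · -- k = 4 : from P4 ⊔ Z into Z
          obtain ⟨p, hp, ζ, hζ, rfl⟩ := Submodule.mem_sup.1 hv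
          have hp' := (P4mem p).1 hp
          have hp2 := (P2mem p).1 hp'.1
          rw [lie_add, hzl ζ hζ, add_zero, add_lie, add_lie, add_lie]
          refine Submodule.add_mem _ (Submodule.add_mem _ (Submodule.add_mem _ ?_ ?_) ?_) ?_
          · rw [hp'.2 hx hhx]; exact Z.zero_mem
          · rw [hzr ζx hζx p]; exact Z.zero_mem
          · rw [← lie_skew, hp2.2.1 wx hwx, neg_zero]; exact Z.zero_mem
          · rw [← lie_skew]; exact Z.neg_mem (hp2.2.2 ax hax)
        · -- k = 5 : from Z into ⊥
          rw [hzl v hv]; exact Submodule.zero_mem _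
        · -- k ≥ 6
          rw [Submodule.mem_bot] at hv
          rw [hv, lie_zero]; exact Submodule.zero_mem _
      have lcsle : ∀ k : ℕ,
          (LieModule.lowerCentralSeries ℝ L L k).toSubmodule ≤ S k := by
        intro k
        induction k with
        | zero => exact le_top
        | succ k ih =>
          rw [LieModule.lowerCentralSeries_succ, LieSubmodule.lieIdeal_oper_eq_linear_span']
          apply Submodule.span_le.2
          rintro z ⟨x, -, n, hn, rfl⟩
          exact bracket k x n (ih ((LieSubmodule.mem_toSubmodule _).2 hn))
      refine (LieModule.isNilpotent_iff ℝ L L).2 ⟨6, ?_⟩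
      rw [← LieSubmodule.toSubmodule_eq_bot]
      exact le_bot_iff.1 (lcsle 6)
  refine ⟨main, fun hWbot => main.2 ?_⟩
  intro a _ b _ w hw
  rw [hWbot, Submodule.mem_bot] at hw
  rw [hw, lie_zero, lie_zero]
  exact Z.zero_mem
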